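/- arXiv:2405.20873 — 2 statements merged into one kernel-verified Lean document; each statement's English description precedes it below -/
import Mathlib

section
/- There exists a complete system of mutually unbiased bases in ℂ^3: four orthonormal bases B_0, B_1, B_2, B_3 of EuclideanSpace ℂ (Fin 3) such that for any two distinct indices k ≠ l and any basis vectors e ∈ B_k, f ∈ B_l, one has |⟨e, f⟩| = 1/√3. -/
open scoped InnerProductSpace

noncomputable def w3 : Fin 3 → ℂ :=
  ![1, ⟨-1/2, Real.sqrt 3/2⟩, ⟨-1/2, -(Real.sqrt 3/2)⟩]

noncomputable def ent (a j m : Fin 3) : ℂ :=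
  (((Real.sqrt 3)⁻¹ : ℝ) : ℂ) * w3 (j * m + a * (m * m))

noncomputable def mubV : Fin 4 → Fin 3 → EuclideanSpace ℂ (Fin 3) :=
  ![fun j => EuclideanSpace.single j 1,
    fun j => WithLp.toLp 2 (fun m => ent 0 j m), fun j => WithLp.toLp 2 (fun m => ent 1 j m),
    fun j => WithLp.toLp 2 (fun m => ent 2 j m)]

lemma norm_of_normSq {z : ℂ} (h : Complex.normSq z = 1/3) : ‖z‖ = 1 / Real.sqrt 3 := by
  rw [Complex.norm_def, h,
    show (1:ℝ)/3 = (3:ℝ)⁻¹ by norm_num, Real.sqrt_inv, one_div]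

set_option maxHeartbeats 2000000 in
lemma mub_orthonormal (k : Fin 4) : Orthonormal ℂ (mubV k) := by
  have h2 : Real.sqrt 3 ^ 2 = 3 := Real.sq_sqrt (by norm_num)
  have h3 : Real.sqrt 3 ^ 3 = 3 * Real.sqrt 3 := by rw [pow_succ, h2]
  have h4 : Real.sqrt 3 ^ 4 = 9 := by nlinarith [h2]
  rw [orthonormal_iff_ite]
  intro i j
  fin_cases k <;> fin_cases i <;> fin_cases j <;>
    simp [mubV, ent, w3, PiLp.inner_apply, RCLike.inner_apply, Fin.sum_univ_three,
      EuclideanSpace.single_apply, Complex.ext_iff, -inner_self_eq_norm_sq_to_K] <;>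
    ring_nf <;> simp only [h2, h3, h4, and_true] <;> norm_num

set_option maxHeartbeats 4000000 in
lemma mub_unbiased_lt (k l : Fin 4) (h : k < l) (i j : Fin 3) :
    ‖⟪mubV k i, mubV l j⟫_ℂ‖ = 1 / Real.sqrt 3 := by
  have h2 : Real.sqrt 3 ^ 2 = 3 := Real.sq_sqrt (by norm_num)
  have h3 : Real.sqrt 3 ^ 3 = 3 * Real.sqrt 3 := by rw [pow_succ, h2]
  have h4 : Real.sqrt 3 ^ 4 = 9 := by nlinarith [h2]
  have h6 : Real.sqrt 3 ^ 6 = 27 := by rw [show (6:ℕ) = 2*3 from rfl, pow_mul, h2]; norm_num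
  have h8 : Real.sqrt 3 ^ 8 = 81 := by rw [show (8:ℕ) = 2*4 from rfl, pow_mul, h2]; norm_num
  fin_cases k <;> fin_cases l <;>
    first
      | exact absurd h (by decide)
      | (apply norm_of_normSq
         fin_cases i <;> fin_cases j <;>
           simp [mubV, ent, w3, PiLp.inner_apply, RCLike.inner_apply, Fin.sum_univ_three,
             EuclideanSpace.single_apply, Complex.normSq_apply] <;>
           ring_nf <;> simp only [h2, h3, h4, h6, h8] <;> norm_num)

lemma mub_unbiased (k l : Fin 4) (h : k ≠ l) (i j : Fin 3) :
    ‖⟪mubV k i, mubV l j⟫_ℂ‖ = 1 / Real.sqrt 3 := by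
  rcases h.lt_or_gt with hlt | hlt
  · exact mub_unbiased_lt k l hlt i j
  · rw [← norm_inner_symm]
    exact mub_unbiased_lt l k hlt j i

noncomputable def mubB (k : Fin 4) : OrthonormalBasis (Fin 3) ℂ (EuclideanSpace ℂ (Fin 3)) :=
  OrthonormalBasis.mk (mub_orthonormal k) (by
    have hc : Fintype.card (Fin 3) = Module.finrank ℂ (EuclideanSpace ℂ (Fin 3)) := by
      simp [finrank_euclideanSpace]
    have hb := (basisOfOrthonormalOfCardEqFinrank (mub_orthonormal k) hc).span_eq
    rw [coe_basisOfOrthonormalOfCardEqFinrank] at hb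
    exact hb.ge)

lemma mubB_apply (k : Fin 4) (i : Fin 3) : mubB k i = mubV k i := by
  simp [mubB, OrthonormalBasis.coe_mk]

/-- There exists a complete system of mutually unbiased bases in `ℂ^3`: four
orthonormal bases such that any two vectors from distinct bases have Hermitian
inner product of absolute value `1/√3`. -/
theorem exists_complete_system_of_MUBs_C3 :
    ∃ B : Fin 4 → OrthonormalBasis (Fin 3) ℂ (EuclideanSpace ℂ (Fin 3)),
      ∀ k l : Fin 4, k ≠ l → ∀ i j : Fin 3,
        ‖⟪B k i, B l j⟫_ℂ‖ = 1 / Real.sqrt 3 := by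
  refine ⟨mubB, fun k l hkl i j => ?_⟩
  rw [mubB_apply, mubB_apply]
  exact mub_unbiased k l hkl i j
end

section
/- There exist four orthonormal bases B_0, B_1, B_2, B_3 of ℂ^3 that are pairwise mutually unbiased (|⟨e, f⟩| = 1/√3 for basis vectors e, f from distinct bases), together with a choice of one unit vector v_k from each basis B_k, such that the four vectors v_0, v_1, v_2, v_3 all lie in a common 2-dimensional complex linear subspace of ℂ^3 and satisfy |⟨v_k, v_l⟩| = 1/√3 for all k ≠ l. -/
open scoped InnerProductSpace
open Complex

noncomputable section
namespace MUB

def ω : ℂ := ⟨-1/2, Real.sqrt 3 / 2⟩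

lemma sq3 : Real.sqrt 3 * Real.sqrt 3 = 3 := Real.mul_self_sqrt (by norm_num)

lemma hω2 : ω ^ 2 = ⟨-1/2, -(Real.sqrt 3 / 2)⟩ := by
  rw [sq]
  apply Complex.ext <;> simp [ω, Complex.mul_re, Complex.mul_im] <;> nlinarith [sq3]

lemma hω3 : ω ^ 3 = 1 := by
  rw [pow_succ, hω2]
  apply Complex.ext <;> simp [ω, Complex.mul_re, Complex.mul_im] <;> nlinarith [sq3]

lemma hωsum : 1 + ω + ω ^ 2 = 0 := by
  rw [hω2]
  apply Complex.ext <;> simp [ω] <;> norm_num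

lemma hconj : (starRingEnd ℂ) ω = ω ^ 2 := by
  rw [hω2]; apply Complex.ext <;> simp [ω]

lemma hpow (n : ℕ) : ω ^ n = ω ^ (n % 3) := by
  conv_lhs => rw [← Nat.div_add_mod n 3]
  rw [pow_add, pow_mul, hω3, one_pow, one_mul]

lemma normSqω : Complex.normSq ω = 1 := by
  simp [ω, Complex.normSq_apply]; nlinarith [sq3]

lemma normω : ‖ω‖ = 1 := by
  rw [Complex.norm_def, normSqω, Real.sqrt_one]

def v (s j : ℕ) : EuclideanSpace ℂ (Fin 3) :=
  WithLp.toLp 2 (fun k : Fin 3 => ((Real.sqrt 3 : ℝ) : ℂ)⁻¹ * ω ^ (s * (k : ℕ) ^ 2 + j * (k : ℕ)))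

lemma hconj_pow (m : ℕ) : (starRingEnd ℂ) (ω ^ m) = ω ^ (2 * m) := by
  rw [map_pow, hconj, ← pow_mul, mul_comm]

lemma inner_vv (s j s' j' : ℕ) :
    ⟪v s j, v s' j'⟫_ℂ = (3 : ℂ)⁻¹ *
      (1 + ω ^ ((2 * (s + j) + (s' + j')) % 3)
         + ω ^ ((2 * (4 * s + 2 * j) + (4 * s' + 2 * j')) % 3)) := by
  have h3 : ((Real.sqrt 3 : ℝ) : ℂ) * ((Real.sqrt 3 : ℝ) : ℂ) = 3 := by
    rw [← Complex.ofReal_mul, sq3]; norm_num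
  simp only [v, PiLp.inner_apply, RCLike.inner_apply, Fin.sum_univ_three]
  simp only [Fin.val_zero, Fin.val_one, Fin.val_two]
  rw [← hpow, ← hpow]
  simp only [map_mul, Complex.conj_ofReal, map_inv₀, hconj_pow]
  have key : ∀ a b : ℕ, ((Real.sqrt 3 : ℝ) : ℂ)⁻¹ * ω ^ a * (((Real.sqrt 3 : ℝ) : ℂ)⁻¹ * ω ^ b)
      = (3 : ℂ)⁻¹ * ω ^ (a + b) := by
    intro a b
    rw [pow_add, show ((Real.sqrt 3 : ℝ) : ℂ)⁻¹ * ω ^ a * (((Real.sqrt 3 : ℝ) : ℂ)⁻¹ * ω ^ b)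
      = (((Real.sqrt 3 : ℝ) : ℂ) * ((Real.sqrt 3 : ℝ) : ℂ))⁻¹ * (ω ^ a * ω ^ b) by
        rw [mul_inv]; ring, h3]
  simp only [key]
  norm_num
  ring_nf
lemma norm_eq_inv_sqrt3 {z : ℂ} (h : Complex.normSq z = 3⁻¹) : ‖z‖ = 1 / Real.sqrt 3 := by
  rw [Complex.norm_def, h, one_div, ← Real.sqrt_inv]

lemma nsq1 : Complex.normSq (1 + ω + 1) = 3 := by
  simp [Complex.normSq_apply, ω]; nlinarith [sq3]
lemma nsq2 : Complex.normSq (1 + ω ^ 2 + 1) = 3 := by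
  simp [Complex.normSq_apply, hω2]; nlinarith [sq3]
lemma nsq3' : Complex.normSq (1 + 1 + ω) = 3 := by
  simp [Complex.normSq_apply, ω]; nlinarith [sq3]
lemma nsq4 : Complex.normSq (1 + 1 + ω ^ 2) = 3 := by
  simp [Complex.normSq_apply, hω2]; nlinarith [sq3]
lemma nsq5 : Complex.normSq (1 + ω + ω) = 3 := by
  simp [Complex.normSq_apply, ω]; nlinarith [sq3]
lemma nsq6 : Complex.normSq (1 + ω ^ 2 + ω ^ 2) = 3 := by
  simp [Complex.normSq_apply, hω2]; nlinarith [sq3]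

lemma nsq7 : Complex.normSq (2 + ω) = 3 := by
  simp [Complex.normSq_apply, ω]; nlinarith [sq3]
lemma nsq8 : Complex.normSq (2 + ω ^ 2) = 3 := by
  simp [Complex.normSq_apply, hω2]; nlinarith [sq3]
lemma nsq9 : Complex.normSq (1 + 2 * ω) = 3 := by
  simp [Complex.normSq_apply, ω]; nlinarith [sq3]
lemma nsq10 : Complex.normSq (1 + 2 * ω ^ 2) = 3 := by
  simp [Complex.normSq_apply, hω2]; nlinarith [sq3]

lemma unb (s s' : Fin 3) (hss : s ≠ s') (j j' : Fin 3) :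
    ‖⟪v (s:ℕ) (j:ℕ), v (s':ℕ) (j':ℕ)⟫_ℂ‖ = 1 / Real.sqrt 3 := by
  apply norm_eq_inv_sqrt3
  rw [inner_vv]
  fin_cases s <;> fin_cases s' <;> (try simp at hss) <;> fin_cases j <;> fin_cases j' <;>
    norm_num [nsq1, nsq2, nsq3', nsq4, nsq5, nsq6, nsq7, nsq8, nsq9, nsq10]

lemma absω : ‖ω‖ = 1 := normω

lemma orth (s : ℕ) : Orthonormal ℂ (fun j : Fin 3 => v s (j : ℕ)) := by
  rw [orthonormal_iff_ite]
  intro j j'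
  rw [inner_vv]
  have e1 : (2 * (s + (j:ℕ)) + (s + (j':ℕ))) % 3 = (2 * (j:ℕ) + (j':ℕ)) % 3 := by omega
  have e2 : (2 * (4 * s + 2 * (j:ℕ)) + (4 * s + 2 * (j':ℕ))) % 3
      = (4 * (j:ℕ) + 2 * (j':ℕ)) % 3 := by omega
  rw [e1, e2]
  fin_cases j <;> fin_cases j' <;> norm_num [Fin.ext_iff] <;>
    linear_combination hωsum

lemma norm_v_apply (s j : ℕ) (p : Fin 3) : ‖v s j p‖ = 1 / Real.sqrt 3 := by
  simp [v, norm_mul, norm_pow, normω, absω, Complex.norm_real,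
    _root_.abs_of_nonneg (Real.sqrt_nonneg 3), one_div]

def Fb (s : ℕ) : OrthonormalBasis (Fin 3) ℂ (EuclideanSpace ℂ (Fin 3)) :=
  (basisOfLinearIndependentOfCardEqFinrank (orth s).linearIndependent
    (by simp [finrank_euclideanSpace_fin])).toOrthonormalBasis (by
      rw [coe_basisOfLinearIndependentOfCardEqFinrank]; exact orth s)

lemma Fb_apply (s : ℕ) (j : Fin 3) : Fb s j = v s (j : ℕ) := by
  simp [Fb, Module.Basis.coe_toOrthonormalBasis, coe_basisOfLinearIndependentOfCardEqFinrank]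

def E0 : EuclideanSpace ℂ (Fin 3) := EuclideanSpace.single (0 : Fin 3) (1 : ℂ)
def U : EuclideanSpace ℂ (Fin 3) := WithLp.toLp 2 (fun k : Fin 3 => if k = 0 then (0 : ℂ) else 1)

lemma li_EU : LinearIndependent ℂ ![E0, U] := by
  rw [LinearIndependent.pair_iff]
  intro a b hab
  have h0 := congrArg (fun x : EuclideanSpace ℂ (Fin 3) => x 0) hab
  have h1 := congrArg (fun x : EuclideanSpace ℂ (Fin 3) => x 1) hab
  constructor
  · simpa [E0, U, EuclideanSpace.single_apply] using h0
  · simpa [E0, U, EuclideanSpace.single_apply] using h1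

def W : Submodule ℂ (EuclideanSpace ℂ (Fin 3)) := Submodule.span ℂ (Set.range ![E0, U])

lemma rank_W : Module.finrank ℂ W = 2 := by
  rw [W, finrank_span_eq_card li_EU]; simp

lemma v_mem (s : ℕ) : v s 0 ∈ W := by
  have hω4 : ω ^ (s * 4) = ω ^ s := by
    rw [show s * 4 = 3 * s + s by ring, pow_add, pow_mul, hω3, one_pow, one_mul]
  have h : v s 0 = ((Real.sqrt 3 : ℝ) : ℂ)⁻¹ • E0
      + (((Real.sqrt 3 : ℝ) : ℂ)⁻¹ * ω ^ s) • U := by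
    ext k
    fin_cases k <;>
      simp [v, E0, U, EuclideanSpace.single_apply, hω4]
  rw [h]
  exact Submodule.add_mem _
    (Submodule.smul_mem _ _ (Submodule.subset_span ⟨0, rfl⟩))
    (Submodule.smul_mem _ _ (Submodule.subset_span ⟨1, rfl⟩))

lemma E0_mem : E0 ∈ W := Submodule.subset_span ⟨0, rfl⟩

lemma normE_cross (s j : ℕ) (p : Fin 3) :
    ‖⟪(EuclideanSpace.single p (1:ℂ) : EuclideanSpace ℂ (Fin 3)), v s j⟫_ℂ‖ = 1 / Real.sqrt 3 := by
  rw [EuclideanSpace.inner_single_left]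
  simpa using norm_v_apply s j p

def Bfam : Fin 4 → OrthonormalBasis (Fin 3) ℂ (EuclideanSpace ℂ (Fin 3)) :=
  ![EuclideanSpace.basisFun (Fin 3) ℂ, Fb 0, Fb 1, Fb 2]

lemma hE (t : ℕ) (p q : Fin 3) :
    ‖⟪EuclideanSpace.basisFun (Fin 3) ℂ p, Fb t q⟫_ℂ‖ = 1 / Real.sqrt 3 := by
  rw [EuclideanSpace.basisFun_apply, Fb_apply]; exact normE_cross _ _ _

lemma hE' (t : ℕ) (p q : Fin 3) :
    ‖⟪Fb t p, EuclideanSpace.basisFun (Fin 3) ℂ q⟫_ℂ‖ = 1 / Real.sqrt 3 := by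
  rw [norm_inner_symm]; exact hE t q p

lemma hFF (t t' : Fin 3) (h : t ≠ t') (p q : Fin 3) :
    ‖⟪Fb (t : ℕ) p, Fb (t' : ℕ) q⟫_ℂ‖ = 1 / Real.sqrt 3 := by
  rw [Fb_apply, Fb_apply]; exact unb t t' h p q

lemma hmain : ∀ k l : Fin 4, k ≠ l → ∀ p q : Fin 3,
    ‖⟪Bfam k p, Bfam l q⟫_ℂ‖ = 1 / Real.sqrt 3 := by
  intro k l hkl p q
  fin_cases k <;> fin_cases l
  · exact absurd rfl hkl
  · exact hE 0 p q
  · exact hE 1 p q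
  · exact hE 2 p q
  · exact hE' 0 p q
  · exact absurd rfl hkl
  · exact hFF 0 1 (by decide) p q
  · exact hFF 0 2 (by decide) p q
  · exact hE' 1 p q
  · exact hFF 1 0 (by decide) p q
  · exact absurd rfl hkl
  · exact hFF 1 2 (by decide) p q
  · exact hE' 2 p q
  · exact hFF 2 0 (by decide) p q
  · exact hFF 2 1 (by decide) p q
  · exact absurd rfl hkl

lemma hmem : ∀ k : Fin 4, Bfam k 0 ∈ W := by
  intro k
  fin_cases k
  · show EuclideanSpace.basisFun (Fin 3) ℂ 0 ∈ W
    rw [EuclideanSpace.basisFun_apply]; exact E0_mem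
  · show Fb 0 0 ∈ W
    rw [Fb_apply]; exact v_mem _
  · show Fb 1 0 ∈ W
    rw [Fb_apply]; exact v_mem _
  · show Fb 2 0 ∈ W
    rw [Fb_apply]; exact v_mem _

end MUB


open MUB in
/-- There exist four pairwise mutually unbiased orthonormal bases of `ℂ³`, together
with a choice of one vector from each basis, such that the four chosen vectors lie in a
common 2-dimensional complex linear subspace and have pairwise Hermitian inner products
of absolute value `1/√3`. -/
theorem exists_MUBs_with_tetrahedron_on_common_line :
    ∃ (B : Fin 4 → OrthonormalBasis (Fin 3) ℂ (EuclideanSpace ℂ (Fin 3)))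
      (i : Fin 4 → Fin 3),
      (∀ k l : Fin 4, k ≠ l → ∀ p q : Fin 3,
        ‖⟪B k p, B l q⟫_ℂ‖ = 1 / Real.sqrt 3) ∧
      (∃ W : Submodule ℂ (EuclideanSpace ℂ (Fin 3)),
        Module.finrank ℂ W = 2 ∧ ∀ k : Fin 4, B k (i k) ∈ W) ∧
      (∀ k l : Fin 4, k ≠ l → ‖⟪B k (i k), B l (i l)⟫_ℂ‖ = 1 / Real.sqrt 3) := by
  exact ⟨Bfam, fun _ => 0, hmain, ⟨W, rank_W, hmem⟩, fun k l h => hmain k l h 0 0⟩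

end
end
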